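/- Suppose M ∈ ℕ and t_1, …, t_M ∈ [0,1] are such that for every nonzero x ∈ X^N there exists some 1 ≤ j ≤ M with x(t_j) ≠ 0. Then there exists a nonzero x ∈ X^N such that (nN/((1+ε)M))·‖x‖_{L_1[0,1]} ≤ (1/M)·∑_{j=1}^M |x(t_j)|. -/

import Mathlib

open MeasureTheory Set Finset
set_option maxHeartbeats 1000000

/-- The interval `I_k(i)` of width `1/(m*N)`, the `i`-th subinterval (1-based)
of `[(k-1)/N, k/N)`. -/
noncomputable def Ik (m N k i : ℕ) : Set ℝ :=
  Set.Ico (((k : ℝ) - 1) / N + ((i : ℝ) - 1) / (m * N))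
    (((k : ℝ) - 1) / N + (i : ℝ) / (m * N))

/-- The functions `x_j` of the construction: for `1 ≤ j ≤ n`,
`x_j = N·𝟙_{[(j-1)/N, j/N)}`, and for `n < j ≤ N`,
`x_j = N·∑_{k=1}^n 𝟙_{I_k(i_{k,j})} + N·𝟙_{[(j-1)/N, j/N)}`, where the indices
`i_{k,j}` are encoded (0-based) by the map `idx`. -/
noncomputable def xfun (n m N : ℕ) (idx : ℕ → Fin n → Fin m) (j : ℕ) : ℝ → ℝ :=
  fun t =>
    if j ≤ n then
      (N : ℝ) * Set.indicator (Set.Ico (((j : ℝ) - 1) / N) ((j : ℝ) / N)) (fun _ => (1 : ℝ)) t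
    else
      (N : ℝ) * ∑ k : Fin n,
          Set.indicator (Ik m N ((k : ℕ) + 1) ((idx j k : ℕ) + 1)) (fun _ => (1 : ℝ)) t
        + (N : ℝ) * Set.indicator (Set.Ico (((j : ℝ) - 1) / N) ((j : ℝ) / N)) (fun _ => (1 : ℝ)) t

lemma ind_integrableOn (a b : ℝ) :
    IntegrableOn ((Set.Ico a b).indicator (fun _ => (1 : ℝ))) (Set.Ico (0:ℝ) 1) := by
  apply Integrable.indicator _ measurableSet_Ico
  exact (integrableOn_const_iff).2 (Or.inr (by simp [Real.volume_Ico]))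

lemma ind_integral (a b : ℝ) (hab : a ≤ b) (h : Set.Ico a b ⊆ Set.Ico (0:ℝ) 1) :
    ∫ s in Set.Ico (0:ℝ) 1, (Set.Ico a b).indicator (fun _ => (1 : ℝ)) s = b - a := by
  rw [MeasureTheory.setIntegral_indicator measurableSet_Ico,
      MeasureTheory.setIntegral_const,
      Set.inter_eq_self_of_subset_right h, measureReal_def, Real.volume_Ico, smul_eq_mul, mul_one,
      ENNReal.toReal_ofReal (by linarith)]

lemma ind_nonneg (A : Set ℝ) (s : ℝ) : (0:ℝ) ≤ A.indicator (fun _ => (1:ℝ)) s :=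
  Set.indicator_nonneg (fun _ _ => zero_le_one) s

theorem stmt3 (n m N : ℕ) (ε : ℝ) (hn : 0 < n) (hε : 0 < ε) (hε1 : ε < 1)
    (hm : (m : ℝ) = n / ε) (hN : N = n + m ^ n)
    (idx : ℕ → Fin n → Fin m) (hidx : Set.BijOn idx (Set.Ioc n N) Set.univ)
    (M : ℕ) (t : Fin M → ℝ) (ht : ∀ j, t j ∈ Set.Icc (0 : ℝ) 1)
    (hsep : ∀ x ∈ Submodule.span ℝ (xfun n m N idx '' Set.Icc 1 N),
      x ≠ 0 → ∃ j, x (t j) ≠ 0) :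
    ∃ x ∈ Submodule.span ℝ (xfun n m N idx '' Set.Icc 1 N), x ≠ 0 ∧
      (n * N : ℝ) / ((1 + ε) * M) * ∫ s in Set.Ico (0 : ℝ) 1, |x s| ≤
        (1 / M : ℝ) * ∑ j, |x (t j)| := by
  have hnN : n ≤ N := hN ▸ Nat.le_add_right n _
  have hN0 : 0 < N := lt_of_lt_of_le hn hnN
  have hm0 : 0 < m := by
    have h1 : (0:ℝ) < (m:ℝ) := by
      rw [hm]
      have : (0:ℝ) < (n:ℝ) := by exact_mod_cast hn
      positivity
    exact_mod_cast h1
  have hNr : (0:ℝ) < (N:ℝ) := by exact_mod_cast hN0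
  have hmr : (0:ℝ) < (m:ℝ) := by exact_mod_cast hm0
  have hnr : (0:ℝ) < (n:ℝ) := by exact_mod_cast hn
  have hmemx : ∀ j : ℕ, 1 ≤ j → j ≤ N →
      xfun n m N idx j ∈ Submodule.span ℝ (xfun n m N idx '' Set.Icc 1 N) :=
    fun j h1 h2 => Submodule.subset_span ⟨j, ⟨h1, h2⟩, rfl⟩
  -- every block [k/N,(k+1)/N), k < n, contains some t u
  have hblock : ∀ k : Fin n, ∃ u : Fin M, t u ∈ Set.Ico ((k:ℝ)/N) (((k:ℝ)+1)/N) := by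
    intro k
    have hk1 : (k:ℕ) + 1 ≤ n := k.isLt
    have hxmem := hmemx ((k:ℕ)+1) (by omega) (le_trans hk1 hnN)
    have hne : xfun n m N idx ((k:ℕ)+1) ≠ 0 := by
      intro h0
      have hval := congrFun h0 ((k:ℝ)/N)
      simp only [xfun, if_pos hk1, Nat.cast_add, Nat.cast_one, add_sub_cancel_right,
        Pi.zero_apply] at hval
      have hmem : (k:ℝ)/N ∈ Set.Ico ((k:ℝ)/N) (((k:ℝ)+1)/N) := by
        refine ⟨le_refl _, ?_⟩
        rw [div_lt_div_iff₀ hNr hNr]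
        nlinarith
      rw [Set.indicator_of_mem hmem, mul_one] at hval
      exact absurd hval (by positivity)
    obtain ⟨u, hu⟩ := hsep _ hxmem hne
    refine ⟨u, ?_⟩
    by_contra hcon
    apply hu
    simp only [xfun, if_pos hk1, Nat.cast_add, Nat.cast_one, add_sub_cancel_right]
    rw [Set.indicator_of_notMem hcon, mul_zero]
  choose l hl using hblock
  -- each of those points lies in some subinterval I_{k+1}(i+1)
  have hIkex : ∀ k : Fin n, ∃ i : Fin m, t (l k) ∈ Ik m N ((k:ℕ)+1) ((i:ℕ)+1) := by
    intro k
    obtain ⟨h1, h2⟩ := hl k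
    set s := t (l k) with hs
    have hmN : (0:ℝ) < (m:ℝ) * N := by positivity
    set u : ℝ := (s - (k:ℝ)/N) * ((m:ℝ)*N) with hu
    have hu0 : 0 ≤ u := mul_nonneg (by linarith) (le_of_lt hmN)
    have hum : u < m := by
      have hlt : s - (k:ℝ)/N < 1/N := by
        have he : ((k:ℝ)+1)/N = (k:ℝ)/N + 1/N := by ring
        rw [he] at h2
        linarith
      calc u < (1/N) * ((m:ℝ)*N) := by
              exact mul_lt_mul_of_pos_right hlt hmN
        _ = m := by field_simp
    have hi0 : ⌊u⌋₊ < m := (Nat.floor_lt hu0).2 (by exact_mod_cast hum)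
    refine ⟨⟨⌊u⌋₊, hi0⟩, ?_⟩
    have hfl : (⌊u⌋₊ : ℝ) ≤ u := Nat.floor_le hu0
    have hfu : u < ⌊u⌋₊ + 1 := Nat.lt_floor_add_one u
    simp only [Ik, Nat.cast_add, Nat.cast_one, add_sub_cancel_right, Set.mem_Ico]
    constructor
    · have : (⌊u⌋₊:ℝ) / ((m:ℝ)*N) ≤ s - (k:ℝ)/N := by
        rw [div_le_iff₀ hmN]; exact hfl
      linarith
    · have : s - (k:ℝ)/N < ((⌊u⌋₊:ℝ)+1) / ((m:ℝ)*N) := by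
        rw [lt_div_iff₀ hmN]; exact hfu
      linarith
  choose i hi using hIkex
  obtain ⟨j, hjmem, hji⟩ := hidx.surjOn (Set.mem_univ i)
  obtain ⟨hjn, hjN⟩ := hjmem
  have hjn' : ¬ (j ≤ n) := by omega
  -- the chosen function
  have hxval : ∀ s : ℝ, xfun n m N idx j s =
      (N : ℝ) * ∑ k : Fin n,
          Set.indicator (Ik m N ((k : ℕ) + 1) ((idx j k : ℕ) + 1)) (fun _ => (1 : ℝ)) s
        + (N : ℝ) * Set.indicator (Set.Ico (((j : ℝ) - 1) / N) ((j : ℝ) / N))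
            (fun _ => (1 : ℝ)) s := by
    intro s; simp only [xfun, if_neg hjn']
  have hsum_nonneg : ∀ s : ℝ, (0:ℝ) ≤ ∑ k : Fin n,
      Set.indicator (Ik m N ((k : ℕ) + 1) ((idx j k : ℕ) + 1)) (fun _ => (1 : ℝ)) s :=
    fun s => Finset.sum_nonneg fun k _ => ind_nonneg _ _
  have hx_nonneg : ∀ s : ℝ, 0 ≤ xfun n m N idx j s := by
    intro s
    rw [hxval s]
    have := hsum_nonneg s
    have := ind_nonneg (Set.Ico (((j : ℝ) - 1) / N) ((j : ℝ) / N)) s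
    positivity
  refine ⟨xfun n m N idx j, hmemx j (by omega) hjN, ?_, ?_⟩
  · -- nonzero
    intro h0
    have hval := congrFun h0 (((j:ℝ)-1)/N)
    rw [hxval] at hval
    simp only [Pi.zero_apply] at hval
    have hmem : ((j:ℝ)-1)/N ∈ Set.Ico (((j:ℝ)-1)/N) ((j:ℝ)/N) := by
      refine ⟨le_refl _, ?_⟩
      rw [div_lt_div_iff₀ hNr hNr]
      nlinarith
    rw [Set.indicator_of_mem hmem, mul_one] at hval
    have := hsum_nonneg (((j:ℝ)-1)/N)
    nlinarith
  -- the inequality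
  have hset : ∀ k : Fin n, Ik m N ((k:ℕ)+1) ((idx j k : ℕ)+1) =
      Set.Ico ((k:ℝ)/N + ((idx j k : ℕ):ℝ)/((m:ℝ)*N))
        ((k:ℝ)/N + (((idx j k : ℕ):ℝ)+1)/((m:ℝ)*N)) := by
    intro k
    simp only [Ik, Nat.cast_add, Nat.cast_one, add_sub_cancel_right]
  have hmN : (0:ℝ) < (m:ℝ) * N := by positivity
  have hIkint : ∀ k : Fin n,
      ∫ s in Set.Ico (0:ℝ) 1,
        (Ik m N ((k:ℕ)+1) ((idx j k : ℕ)+1)).indicator (fun _ => (1:ℝ)) s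
        = 1/((m:ℝ)*N) := by
    intro k
    have hkn : (k:ℝ)+1 ≤ (n:ℝ) := by exact_mod_cast k.isLt
    have hi1 : ((idx j k : ℕ):ℝ)+1 ≤ (m:ℝ) := by exact_mod_cast (idx j k).isLt
    have hi0 : (0:ℝ) ≤ ((idx j k : ℕ):ℝ) := Nat.cast_nonneg _
    have hk0 : (0:ℝ) ≤ (k:ℝ) := Nat.cast_nonneg _
    rw [hset k, ind_integral]
    · ring
    · have : ((idx j k : ℕ):ℝ)/((m:ℝ)*N) ≤ (((idx j k : ℕ):ℝ)+1)/((m:ℝ)*N) := by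
        gcongr
        linarith
      linarith
    · intro s hs
      obtain ⟨h1, h2⟩ := hs
      constructor
      · have : (0:ℝ) ≤ (k:ℝ)/N + ((idx j k : ℕ):ℝ)/((m:ℝ)*N) := by positivity
        linarith
      · have e1 : (((idx j k : ℕ):ℝ)+1)/((m:ℝ)*N) ≤ (m:ℝ)/((m:ℝ)*N) := by
          gcongr
        have e2 : (m:ℝ)/((m:ℝ)*N) = 1/N := by field_simp
        have e3 : (k:ℝ)/N + 1/N ≤ (n:ℝ)/N := by
          rw [← add_div, div_le_div_iff₀ hNr hNr]
          nlinarith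
        have e4 : (n:ℝ)/N ≤ 1 := by
          rw [div_le_one hNr]; exact_mod_cast hnN
        linarith
  have hBint : ∫ s in Set.Ico (0:ℝ) 1,
      (Set.Ico (((j:ℝ)-1)/N) ((j:ℝ)/N)).indicator (fun _ => (1:ℝ)) s = 1/(N:ℝ) := by
    have hj1 : (1:ℝ) ≤ (j:ℝ) := by exact_mod_cast (by omega : 1 ≤ j)
    have hjNr : (j:ℝ) ≤ (N:ℝ) := by exact_mod_cast hjN
    rw [ind_integral]
    · rw [div_sub_div_same]; ring_nf
    · rw [div_le_div_iff₀ hNr hNr]; nlinarith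
    · intro s hs
      obtain ⟨h1, h2⟩ := hs
      constructor
      · have : (0:ℝ) ≤ ((j:ℝ)-1)/N := by
          apply div_nonneg (by linarith) (le_of_lt hNr)
        linarith
      · have : (j:ℝ)/N ≤ 1 := by rw [div_le_one hNr]; exact hjNr
        linarith
  have hIkIntOn : ∀ k : Fin n, IntegrableOn
      ((Ik m N ((k:ℕ)+1) ((idx j k : ℕ)+1)).indicator (fun _ => (1:ℝ)))
      (Set.Ico (0:ℝ) 1) := by
    intro k; rw [hset k]; exact ind_integrableOn _ _
  have hint : ∫ s in Set.Ico (0:ℝ) 1, |xfun n m N idx j s| = 1 + ε := by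
    have habs : ∫ s in Set.Ico (0:ℝ) 1, |xfun n m N idx j s|
        = ∫ s in Set.Ico (0:ℝ) 1, xfun n m N idx j s :=
      integral_congr_ae (Filter.Eventually.of_forall fun s => abs_of_nonneg (hx_nonneg s))
    rw [habs]
    have hrw : ∫ s in Set.Ico (0:ℝ) 1, xfun n m N idx j s
        = ∫ s in Set.Ico (0:ℝ) 1,
            ((N : ℝ) * ∑ k : Fin n,
              Set.indicator (Ik m N ((k : ℕ) + 1) ((idx j k : ℕ) + 1)) (fun _ => (1 : ℝ)) s
            + (N : ℝ) * Set.indicator (Set.Ico (((j : ℝ) - 1) / N) ((j : ℝ) / N))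
                (fun _ => (1 : ℝ)) s) :=
      integral_congr_ae (Filter.Eventually.of_forall fun s => hxval s)
    rw [hrw]
    have hint1 : Integrable (fun s => ∑ k : Fin n,
        Set.indicator (Ik m N ((k : ℕ) + 1) ((idx j k : ℕ) + 1)) (fun _ => (1 : ℝ)) s)
        (volume.restrict (Set.Ico (0:ℝ) 1)) :=
      integrable_finset_sum _ fun k _ => hIkIntOn k
    have hint2 : Integrable (fun s =>
        Set.indicator (Set.Ico (((j : ℝ) - 1) / N) ((j : ℝ) / N)) (fun _ => (1 : ℝ)) s)
        (volume.restrict (Set.Ico (0:ℝ) 1)) := ind_integrableOn _ _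
    rw [integral_add (hint1.const_mul _) (hint2.const_mul _), integral_const_mul,
      integral_const_mul, integral_finset_sum _ fun k _ => hIkIntOn k]
    have hsumval : ∑ k : Fin n, (∫ s in Set.Ico (0:ℝ) 1,
        (Ik m N ((k:ℕ)+1) ((idx j k : ℕ)+1)).indicator (fun _ => (1:ℝ)) s)
        = (n:ℝ) * (1/((m:ℝ)*N)) := by
      rw [Finset.sum_congr rfl fun k _ => hIkint k]
      simp [Finset.sum_const, Finset.card_univ]
    rw [hsumval, hBint]
    have hnm : (n:ℝ)/(m:ℝ) = ε := by
      rw [hm]; field_simp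
    rw [← hnm]
    field_simp
    ring
  rw [hint]
  -- distinctness of the points
  have hlinj : Function.Injective l := by
    intro k k' hkk'
    have h1 := hl k
    have h2 := hl k'
    rw [hkk'] at h1
    have ha : (k:ℝ)/N < ((k':ℝ)+1)/N := lt_of_le_of_lt h1.1 h2.2
    have hb : (k':ℝ)/N < ((k:ℝ)+1)/N := lt_of_le_of_lt h2.1 h1.2
    rw [div_lt_div_iff₀ hNr hNr] at ha hb
    have ha' : (k:ℕ) < (k':ℕ) + 1 := by exact_mod_cast (by nlinarith : (k:ℝ) < (k':ℝ)+1)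
    have hb' : (k':ℕ) < (k:ℕ) + 1 := by exact_mod_cast (by nlinarith : (k':ℝ) < (k:ℝ)+1)
    exact Fin.ext (by omega)
  have hsum : (n:ℝ) * N ≤ ∑ u : Fin M, |xfun n m N idx j (t u)| := by
    have h1 : ∀ k : Fin n, (N:ℝ) ≤ |xfun n m N idx j (t (l k))| := by
      intro k
      rw [abs_of_nonneg (hx_nonneg _), hxval]
      have hindk : (Ik m N ((k:ℕ)+1) ((idx j k : ℕ)+1)).indicator (fun _ => (1:ℝ))
          (t (l k)) = 1 := by
        rw [hji]
        exact Set.indicator_of_mem (hi k) _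
      have hone : (1:ℝ) ≤ ∑ k' : Fin n,
          (Ik m N ((k':ℕ)+1) ((idx j k' : ℕ)+1)).indicator (fun _ => (1:ℝ)) (t (l k)) := by
        have h0 : (Ik m N ((k:ℕ)+1) ((idx j k : ℕ)+1)).indicator (fun _ => (1:ℝ)) (t (l k))
            ≤ ∑ k' : Fin n,
              (Ik m N ((k':ℕ)+1) ((idx j k' : ℕ)+1)).indicator (fun _ => (1:ℝ)) (t (l k)) :=
          Finset.single_le_sum
          (f := fun k' : Fin n =>
            (Ik m N ((k':ℕ)+1) ((idx j k' : ℕ)+1)).indicator (fun _ => (1:ℝ)) (t (l k)))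
          (fun k' _ => ind_nonneg _ _) (Finset.mem_univ k)
        rw [hindk] at h0
        exact h0
      have hB := ind_nonneg (Set.Ico (((j:ℝ)-1)/N) ((j:ℝ)/N)) (t (l k))
      nlinarith
    calc (n:ℝ) * N = ∑ _k : Fin n, (N:ℝ) := by
          simp [Finset.sum_const, Finset.card_univ, mul_comm]
      _ ≤ ∑ k : Fin n, |xfun n m N idx j (t (l k))| := Finset.sum_le_sum fun k _ => h1 k
      _ = ∑ u ∈ Finset.univ.image l, |xfun n m N idx j (t u)| :=
          (Finset.sum_image (g := l) (f := fun u => |xfun n m N idx j (t u)|)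
            fun a _ b _ h => hlinj h).symm
      _ ≤ ∑ u : Fin M, |xfun n m N idx j (t u)| :=
          Finset.sum_le_sum_of_subset_of_nonneg (Finset.subset_univ _)
            (fun u _ _ => abs_nonneg _)
  have hM0 : 0 < M := (l ⟨0, hn⟩).pos
  have hMr : (0:ℝ) < (M:ℝ) := by exact_mod_cast hM0
  have heq : (↑n * ↑N : ℝ) / ((1 + ε) * ↑M) * (1 + ε) = (↑n * ↑N) / ↑M := by
    field_simp
  rw [heq, one_div, inv_mul_eq_div, div_le_div_iff₀ hMr hMr]
  nlinarith [hsum, hMr]
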